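/- Let 1 ≤ l < k ≤ n be integers and let H > h ≥ 0 be real numbers with H − h < (k−l)/2; set ℋ := (k−l)/(2(H−h)) (so ℋ > 1). Fix β ∈ ℝ and s̄ > 0, and for α > 0 define μ₁(α) := β − s̄ + ∫_{s̄}^∞ (v_α(t) − 1) dt. Then: (1) the integral ∫_{s̄}^∞ (v_α(t) − 1) dt converges, so μ₁(α) < ∞; (2) μ₁ is strictly increasing on (0,∞); (3) lim_{α→∞} μ₁(α) = ∞; (4) ω_α(s) := β + ∫_{s̄}^s v_α(t) dt satisfies ω_α(s) = s + μ₁(α) + O(s^{1−ℋ}) as s → ∞. -/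

import Mathlib

open scoped BigOperators
open Filter MeasureTheory Set

noncomputable section

/-- Euclidean `n`-space `ℝⁿ`. -/
abbrev En (n : ℕ) : Type := EuclideanSpace ℝ (Fin n)

/-- `σ_k(a)`: the `k`-th elementary symmetric polynomial of `a : Fin n → ℝ`. -/
def esym (n k : ℕ) (a : Fin n → ℝ) : ℝ :=
  ∑ t ∈ Finset.powersetCard k (Finset.univ : Finset (Fin n)), ∏ i ∈ t, a i

/-- `σ_{k;i}(a) := σ_k(a)|_{a_i = 0}`. -/
def esymDel (n k : ℕ) (a : Fin n → ℝ) (i : Fin n) : ℝ :=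
  esym n k (Function.update a i 0)

/-- `H_k(a) = max_{1 ≤ i ≤ n} σ_{k-1;i}(a) a_i / σ_k(a)`. -/
def Hfun (n k : ℕ) (a : Fin n → ℝ) : ℝ :=
  ⨆ i : Fin n, esymDel n (k - 1) a i * a i / esym n k a

/-- `h_l(a) = min_{1 ≤ i ≤ n} σ_{l-1;i}(a) a_i / σ_l(a)`, with `h_0 = 0`. -/
def hfun (n l : ℕ) (a : Fin n → ℝ) : ℝ :=
  if l = 0 then 0 else ⨅ i : Fin n, esymDel n (l - 1) a i * a i / esym n l a

/-- The Hessian matrix `D²u(x)` of a function `u : ℝⁿ → ℝ`. -/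
def hess {n : ℕ} (u : En n → ℝ) (x : En n) : Matrix (Fin n) (Fin n) ℝ :=
  Matrix.of fun i j =>
    fderiv ℝ (fun y => fderiv ℝ u y (EuclideanSpace.single j 1)) x (EuclideanSpace.single i 1)

/-- `σ_k(λ(M))`: the `k`-th elementary symmetric function of the eigenvalues of `M`,
expressed via the coefficients of the characteristic polynomial. -/
def sigmaEig {n : ℕ} (k : ℕ) (M : Matrix (Fin n) (Fin n) ℝ) : ℝ :=
  (-1 : ℝ) ^ k * M.charpoly.coeff (n - k)

/-- The Hessian quotient operator `S_{k,l}(M) = σ_k(λ(M))/σ_l(λ(M))`. -/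
def Skl {n : ℕ} (k l : ℕ) (M : Matrix (Fin n) (Fin n) ℝ) : ℝ :=
  sigmaEig k M / sigmaEig l M

/-- The Garding cone `Γ_k = {λ : σ_j(λ) > 0, 1 ≤ j ≤ k}`. -/
def GammaCone (n k : ℕ) : Set (Fin n → ℝ) :=
  {lam | ∀ j : ℕ, 1 ≤ j → j ≤ k → 0 < esym n j lam}

/-- `ψ` is `k`-convex at `x`: the (symmetric) Hessian has eigenvalue vector in `closure Γ_k`. -/
def KConvexAt (n k : ℕ) (ψ : En n → ℝ) (x : En n) : Prop :=
  ∃ hsym : (hess ψ x).IsHermitian, hsym.eigenvalues ∈ closure (GammaCone n k)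

/-- Viscosity subsolution of `S_{k,l}(D²u) = 1` on `Ω`. -/
def ViscSubOn (n k l : ℕ) (Ω : Set (En n)) (u : En n → ℝ) : Prop :=
  UpperSemicontinuousOn u Ω ∧
  ∀ ψ : En n → ℝ, ContDiffOn ℝ 2 ψ Ω → (∀ x ∈ Ω, KConvexAt n k ψ x) →
    ∀ x₀ ∈ Ω, ψ x₀ = u x₀ → (∀ x ∈ Ω, u x ≤ ψ x) → 1 ≤ Skl k l (hess ψ x₀)

/-- Viscosity supersolution of `S_{k,l}(D²u) = 1` on `Ω`. -/
def ViscSupOn (n k l : ℕ) (Ω : Set (En n)) (u : En n → ℝ) : Prop :=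
  LowerSemicontinuousOn u Ω ∧
  ∀ ψ : En n → ℝ, ContDiffOn ℝ 2 ψ Ω → (∀ x ∈ Ω, KConvexAt n k ψ x) →
    ∀ x₀ ∈ Ω, ψ x₀ = u x₀ → (∀ x ∈ Ω, ψ x ≤ u x) → Skl k l (hess ψ x₀) ≤ 1

/-- Viscosity solution of the exterior Dirichlet problem
`S_{k,l}(D²u) = 1` in `ℝⁿ ∖ D̄`, `u = φ` on `∂D`, `u ∈ C⁰(ℝⁿ ∖ D)`. -/
def ExtViscSolution (n k l : ℕ) (D : Set (En n)) (φ u : En n → ℝ) : Prop :=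
  ContinuousOn u Dᶜ ∧
  ViscSubOn n k l (closure D)ᶜ u ∧
  ViscSupOn n k l (closure D)ᶜ u ∧
  ∀ x ∈ frontier D, u x = φ x

/-- A smooth, bounded, strictly convex open set. -/
structure SmoothStrictlyConvexDomain (n : ℕ) (D : Set (En n)) : Prop where
  isOpen : IsOpen D
  nonempty : D.Nonempty
  bounded : Bornology.IsBounded D
  strictConvex : StrictConvex ℝ D
  smoothBoundary : ∃ f : En n → ℝ, ContDiff ℝ (⊤ : ℕ∞) f ∧ D = {x | f x < 0} ∧
    ∀ x ∈ frontier D, fderiv ℝ f x ≠ 0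

/-- `½ xᵀ A x`. -/
def quadForm {n : ℕ} (A : Matrix (Fin n) (Fin n) ℝ) (x : En n) : ℝ :=
  (1 / 2) * ∑ i, ∑ j, A i j * x i * x j

/-- `s(x) = ½ ∑ a_i x_i²` (i.e. `½ xᵀAx` for `A = diag a`). -/
def sdiag {n : ℕ} (a : Fin n → ℝ) (x : En n) : ℝ :=
  (1 / 2) * ∑ i, a i * x i ^ 2

end

noncomputable section

/-- `ℋ = (k − l)/(2(H − h))`. -/
def calH (k l : ℕ) (H h : ℝ) : ℝ := ((k : ℝ) - l) / (2 * (H - h))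

/-- The defining property of the function `v_α`: for every `s > 0`, `v_α(s) > 1` and
`(v_α(s)^{k−l} − 1) v_α(s)^{2ℋh} = α s^{−ℋ}`. -/
def IsVsol (k l : ℕ) (H h α : ℝ) (v : ℝ → ℝ) : Prop :=
  ∀ s : ℝ, 0 < s → 1 < v s ∧
    (v s ^ (k - l) - 1) * v s ^ (2 * calH k l H h * h) = α * s ^ (-calH k l H h)

/-- `ω_α(x) = β + ∫_{s̄}^{½xᵀAx} v_α(t) dt` for `A = diag a`. -/
def omegaA {n : ℕ} (β sbar : ℝ) (v : ℝ → ℝ) (a : Fin n → ℝ) (x : En n) : ℝ :=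
  β + ∫ t in sbar..(sdiag a x), v t

end

/-- The auxiliary function `F(v) = (v^m − 1) v^e` is strictly increasing on `[1, ∞)`. -/
lemma F_strictMonoOn_aux (m : ℕ) (hm : m ≠ 0) {e : ℝ} (he : 0 ≤ e) :
    StrictMonoOn (fun v : ℝ => (v ^ m - 1) * v ^ e) (Set.Ici (1 : ℝ)) := by
  intro x hx y hy hxy
  have hx1 : (1:ℝ) ≤ x := hx
  have hx0 : (0:ℝ) < x := lt_of_lt_of_le one_pos hx1
  have hy0 : (0:ℝ) < y := lt_trans hx0 hxy
  have h1 : x ^ m - 1 < y ^ m - 1 := by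
    have := pow_lt_pow_left₀ hxy hx0.le hm
    linarith
  have h2 : x ^ e ≤ y ^ e := Real.rpow_le_rpow hx0.le hxy.le he
  have h3 : (0:ℝ) ≤ x ^ m - 1 := by
    have : (1:ℝ) ≤ x ^ m := one_le_pow₀ hx1
    linarith
  calc (x ^ m - 1) * x ^ e ≤ (x ^ m - 1) * y ^ e := mul_le_mul_of_nonneg_left h2 h3
    _ < (y ^ m - 1) * y ^ e := mul_lt_mul_of_pos_right h1 (Real.rpow_pos_of_pos hy0 e)

/-- Case 1 of Section 2: when `H − h < (k−l)/2`, the constant `μ₁(α)` is finite,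
strictly increasing in `α`, tends to `∞`, and `ω_α(s) = s + μ₁(α) + O(s^{1−ℋ})`. -/
theorem mu_one_properties
    (n k l : ℕ) (hl1 : 1 ≤ l) (hlk : l < k) (hkn : k ≤ n)
    (H h : ℝ) (hh : 0 ≤ h) (hHh : h < H)
    (hsub : H - h < ((k : ℝ) - l) / 2)
    (β sbar : ℝ) (hsbar : 0 < sbar)
    (V : ℝ → ℝ → ℝ) (hV : ∀ α : ℝ, 0 < α → IsVsol k l H h α (V α)) :
    -- (1) convergence of the integral defining μ₁(α)
    (∀ α : ℝ, 0 < α → IntegrableOn (fun t => V α t - 1) (Set.Ioi sbar)) ∧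
    -- (2) μ₁ is strictly increasing
    StrictMonoOn (fun α => β - sbar + ∫ t in Set.Ioi sbar, (V α t - 1)) (Set.Ioi (0 : ℝ)) ∧
    -- (3) μ₁(α) → ∞ as α → ∞
    Tendsto (fun α => β - sbar + ∫ t in Set.Ioi sbar, (V α t - 1)) atTop atTop ∧
    -- (4) ω_α(s) = s + μ₁(α) + O(s^{1−ℋ}) as s → ∞
    (∀ α : ℝ, 0 < α → ∃ C S : ℝ, 0 < C ∧ 0 < S ∧ ∀ s : ℝ, S ≤ s →
      |(β + ∫ t in sbar..s, V α t) -
          (s + (β - sbar + ∫ t in Set.Ioi sbar, (V α t - 1)))| ≤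
        C * s ^ (1 - calH k l H h)) := by
  have hHh' : 0 < H - h := by linarith
  set ℋ := calH k l H h with hℋdef
  have hkl : (1:ℝ) ≤ (k:ℝ) - (l:ℝ) := by
    have : (l:ℝ) + 1 ≤ (k:ℝ) := by exact_mod_cast hlk
    linarith
  have hℋ1 : 1 < ℋ := by
    rw [hℋdef, calH, lt_div_iff₀ (by linarith : (0:ℝ) < 2 * (H - h))]
    linarith
  have he : 0 ≤ 2 * ℋ * h := by
    have : (0:ℝ) ≤ ℋ := by linarith
    positivity
  have hm : k - l ≠ 0 := Nat.sub_ne_zero_of_lt hlk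
  have hF := F_strictMonoOn_aux (k - l) hm he
  -- pointwise upper bound `V α s − 1 ≤ α s^{−ℋ}`
  have hbound : ∀ α : ℝ, 0 < α → ∀ s : ℝ, 0 < s → V α s - 1 ≤ α * s ^ (-ℋ) := by
    intro α hα s hs
    obtain ⟨hv1, heq⟩ := hV α hα s hs
    have h1 : V α s ≤ V α s ^ (k - l) := le_self_pow₀ hv1.le hm
    have h2 : (1:ℝ) ≤ V α s ^ (2 * ℋ * h) := by
      have := Real.rpow_le_rpow_of_exponent_le hv1.le he
      simpa using this
    have h3 : (0:ℝ) ≤ V α s ^ (k - l) - 1 := by linarith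
    calc V α s - 1 ≤ V α s ^ (k - l) - 1 := by linarith
      _ ≤ (V α s ^ (k - l) - 1) * V α s ^ (2 * ℋ * h) := le_mul_of_one_le_right h3 h2
      _ = α * s ^ (-ℋ) := heq
  -- `V α` is antitone on `(0, ∞)`
  have hanti : ∀ α : ℝ, 0 < α → AntitoneOn (V α) (Set.Ioi (0:ℝ)) := by
    intro α hα s₁ hs₁ s₂ hs₂ h12
    by_contra hcon
    push_neg at hcon
    obtain ⟨hv11, heq₁⟩ := hV α hα s₁ hs₁
    obtain ⟨hv12, heq₂⟩ := hV α hα s₂ hs₂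
    have hlt := hF (Set.mem_Ici.mpr hv11.le) (Set.mem_Ici.mpr hv12.le) hcon
    simp only at hlt
    rw [heq₁, heq₂] at hlt
    have hr : s₂ ^ (-ℋ) ≤ s₁ ^ (-ℋ) :=
      Real.rpow_le_rpow_of_nonpos hs₁ h12 (by linarith)
    nlinarith
  -- `V` is strictly increasing in `α`
  have hmonoα : ∀ α₁ α₂ : ℝ, 0 < α₁ → α₁ < α₂ → ∀ s : ℝ, 0 < s → V α₁ s < V α₂ s := by
    intro α₁ α₂ hα₁ h12 s hs
    obtain ⟨hv11, heq₁⟩ := hV α₁ hα₁ s hs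
    obtain ⟨hv12, heq₂⟩ := hV α₂ (lt_trans hα₁ h12) s hs
    by_contra hcon
    push_neg at hcon
    have hle := hF.monotoneOn (Set.mem_Ici.mpr hv12.le) (Set.mem_Ici.mpr hv11.le) hcon
    rw [heq₁, heq₂] at hle
    have hspow : 0 < s ^ (-ℋ) := Real.rpow_pos_of_pos hs _
    nlinarith
  -- nonnegativity of the integrand
  have hnonneg : ∀ α : ℝ, 0 < α → ∀ t ∈ Set.Ioi sbar, (0:ℝ) ≤ V α t - 1 := by
    intro α hα t ht
    have := (hV α hα t (lt_trans hsbar ht)).1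
    linarith
  -- part (1)
  have hpart1 : ∀ α : ℝ, 0 < α → IntegrableOn (fun t => V α t - 1) (Set.Ioi sbar) := by
    intro α hα
    have hsubset : Set.Ioi sbar ⊆ Set.Ioi (0:ℝ) := fun t ht => lt_trans hsbar ht
    have hmeas : AEStronglyMeasurable (fun t => V α t - 1)
        (volume.restrict (Set.Ioi sbar)) := by
      have h1 : AntitoneOn (V α) (Set.Ioi sbar) := (hanti α hα).mono hsubset
      exact ((aemeasurable_restrict_of_antitoneOn measurableSet_Ioi h1).sub
        aemeasurable_const).aestronglyMeasurable
    have hdom : IntegrableOn (fun t => α * t ^ (-ℋ)) (Set.Ioi sbar) :=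
      (integrableOn_Ioi_rpow_of_lt (by linarith) hsbar).const_mul α
    refine hdom.mono' hmeas ?_
    rw [ae_restrict_iff' measurableSet_Ioi]
    refine Filter.Eventually.of_forall fun t ht => ?_
    have ht0 : 0 < t := lt_trans hsbar ht
    rw [Real.norm_eq_abs, abs_of_nonneg (hnonneg α hα t ht)]
    exact hbound α hα t ht0
  refine ⟨hpart1, ?_, ?_, ?_⟩
  -- part (2)
  · intro α₁ hα₁ α₂ hα₂ h12
    simp only
    have hi₁ := hpart1 α₁ hα₁
    have hi₂ := hpart1 α₂ hα₂
    have hsubI : Integrable (fun t => (V α₂ t - 1) - (V α₁ t - 1))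
        (volume.restrict (Set.Ioi sbar)) := hi₂.sub hi₁
    have hposae : 0 ≤ᵐ[volume.restrict (Set.Ioi sbar)]
        fun t => (V α₂ t - 1) - (V α₁ t - 1) := by
      filter_upwards [ae_restrict_mem measurableSet_Ioi] with t ht
      have := hmonoα α₁ α₂ hα₁ h12 t (lt_trans hsbar ht)
      simp only [Pi.zero_apply]
      linarith
    have hpos : 0 < ∫ t in Set.Ioi sbar, ((V α₂ t - 1) - (V α₁ t - 1)) := by
      rw [MeasureTheory.setIntegral_pos_iff_support_of_nonneg_ae hposae hsubI]
      have hsub : Set.Ioi sbar ⊆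
          (Function.support fun t => (V α₂ t - 1) - (V α₁ t - 1)) ∩ Set.Ioi sbar := by
        intro t ht
        refine ⟨?_, ht⟩
        have := hmonoα α₁ α₂ hα₁ h12 t (lt_trans hsbar ht)
        simp only [Function.mem_support]
        intro hc
        linarith
      calc (0:ENNReal) < volume (Set.Ioi sbar) := by simp [Real.volume_Ioi]
        _ ≤ _ := measure_mono hsub
    rw [MeasureTheory.integral_sub hi₂ hi₁] at hpos
    linarith
  -- part (3)
  · rw [tendsto_atTop]
    intro b
    set M : ℝ := max 2 (1 + (b - β + sbar) / sbar) with hMdef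
    have hM2 : (2:ℝ) ≤ M := le_max_left _ _
    have hM1 : (1:ℝ) < M := by linarith
    set A₀ : ℝ := (M ^ (k - l) - 1) * M ^ (2 * ℋ * h) * (2 * sbar) ^ ℋ with hA₀def
    filter_upwards [Filter.eventually_gt_atTop (max 0 A₀)] with α hα
    have hα0 : 0 < α := lt_of_le_of_lt (le_max_left _ _) hα
    have hαA : A₀ < α := lt_of_le_of_lt (le_max_right _ _) hα
    have h2s : 0 < 2 * sbar := by linarith
    obtain ⟨hv1, heq⟩ := hV α hα0 (2 * sbar) h2s
    have hVM : M < V α (2 * sbar) := by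
      by_contra hc
      push_neg at hc
      have hle := hF.monotoneOn (Set.mem_Ici.mpr hv1.le) (Set.mem_Ici.mpr hM1.le) hc
      rw [heq] at hle
      have hp : (0:ℝ) < (2 * sbar) ^ ℋ := Real.rpow_pos_of_pos h2s _
      rw [Real.rpow_neg h2s.le] at hle
      have hcontra : α ≤ A₀ := by
        rw [hA₀def]
        calc α = α * ((2 * sbar) ^ ℋ)⁻¹ * (2 * sbar) ^ ℋ := by field_simp
          _ ≤ (M ^ (k - l) - 1) * M ^ (2 * ℋ * h) * (2 * sbar) ^ ℋ :=
            mul_le_mul_of_nonneg_right hle hp.le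
      linarith
    have hIoc : IntegrableOn (fun t => V α t - 1) (Set.Ioc sbar (2 * sbar)) :=
      (hpart1 α hα0).mono_set Set.Ioc_subset_Ioi_self
    have h1 : ∫ t in Set.Ioc sbar (2 * sbar), (M - 1 : ℝ) ≤
        ∫ t in Set.Ioc sbar (2 * sbar), (V α t - 1) := by
      refine MeasureTheory.setIntegral_mono_on
        (integrableOn_const measure_Ioc_lt_top.ne) hIoc measurableSet_Ioc ?_
      intro t ht
      have ht0 : 0 < t := lt_trans hsbar ht.1
      have hVt : V α (2 * sbar) ≤ V α t :=
        hanti α hα0 (Set.mem_Ioi.mpr ht0) (Set.mem_Ioi.mpr h2s) ht.2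
      linarith
    have h2 : ∫ t in Set.Ioc sbar (2 * sbar), (V α t - 1) ≤
        ∫ t in Set.Ioi sbar, (V α t - 1) := by
      refine MeasureTheory.setIntegral_mono_set (hpart1 α hα0) ?_
        (HasSubset.Subset.eventuallyLE Set.Ioc_subset_Ioi_self)
      filter_upwards [ae_restrict_mem measurableSet_Ioi] with t ht
      exact hnonneg α hα0 t ht
    have h3 : ∫ t in Set.Ioc sbar (2 * sbar), (M - 1 : ℝ) = (M - 1) * sbar := by
      rw [MeasureTheory.setIntegral_const, Real.volume_real_Ioc_of_le (by linarith : sbar ≤ 2 * sbar)]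
      simp only [smul_eq_mul]
      ring
    have hMb : b ≤ β - sbar + (M - 1) * sbar := by
      have hM' : 1 + (b - β + sbar) / sbar ≤ M := le_max_right _ _
      have := (div_le_iff₀ hsbar).mp (by linarith : (b - β + sbar) / sbar ≤ M - 1)
      linarith
    linarith [h3 ▸ h1, h2]
  -- part (4)
  · intro α hα
    refine ⟨α / (ℋ - 1), max sbar 1, div_pos hα (by linarith),
      lt_of_lt_of_le hsbar (le_max_left _ _), ?_⟩
    intro s hs
    have hs1 : (1:ℝ) ≤ s := le_trans (le_max_right _ _) hs
    have hss : sbar ≤ s := le_trans (le_max_left _ _) hs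
    have hs0 : (0:ℝ) < s := lt_of_lt_of_le one_pos hs1
    have hIoiS : IntegrableOn (fun t => V α t - 1) (Set.Ioi sbar) := hpart1 α hα
    have hIocs : IntegrableOn (fun t => V α t - 1) (Set.Ioc sbar s) :=
      hIoiS.mono_set Set.Ioc_subset_Ioi_self
    have hIois : IntegrableOn (fun t => V α t - 1) (Set.Ioi s) :=
      hIoiS.mono_set (Set.Ioi_subset_Ioi hss)
    have hdisj : Disjoint (Set.Ioc sbar s) (Set.Ioi s) :=
      Set.disjoint_left.mpr fun t ht ht' => absurd ht.2 (not_le.mpr ht')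
    have hsplit : ∫ t in Set.Ioi sbar, (V α t - 1) =
        (∫ t in Set.Ioc sbar s, (V α t - 1)) + ∫ t in Set.Ioi s, (V α t - 1) := by
      rw [← MeasureTheory.setIntegral_union hdisj measurableSet_Ioi hIocs hIois,
        Set.Ioc_union_Ioi_eq_Ioi hss]
    have hconst : IntegrableOn (fun _ : ℝ => (1:ℝ)) (Set.Ioc sbar s) :=
      integrableOn_const measure_Ioc_lt_top.ne
    have hint1 : ∫ t in sbar..s, V α t =
        (∫ t in Set.Ioc sbar s, (V α t - 1)) + (s - sbar) := by
      rw [intervalIntegral.integral_of_le hss]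
      have hsum : ∫ t in Set.Ioc sbar s, V α t =
          (∫ t in Set.Ioc sbar s, (V α t - 1)) + ∫ t in Set.Ioc sbar s, (1:ℝ) := by
        rw [← MeasureTheory.integral_add hIocs hconst]
        simp
      have hone : ∫ t in Set.Ioc sbar s, (1:ℝ) = s - sbar := by
        simp [Real.volume_Ioc, ENNReal.toReal_ofReal (by linarith : (0:ℝ) ≤ s - sbar), hss]
      rw [hsum, hone]
    have hkey : (β + ∫ t in sbar..s, V α t) -
        (s + (β - sbar + ∫ t in Set.Ioi sbar, (V α t - 1))) =
        -(∫ t in Set.Ioi s, (V α t - 1)) := by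
      rw [hint1, hsplit]
      ring
    rw [hkey, abs_neg]
    have hnn : 0 ≤ ∫ t in Set.Ioi s, (V α t - 1) := by
      refine MeasureTheory.setIntegral_nonneg measurableSet_Ioi fun t ht => ?_
      have := (hV α hα t (lt_trans hs0 ht)).1
      linarith
    rw [abs_of_nonneg hnn]
    have hdomS : IntegrableOn (fun t => α * t ^ (-ℋ)) (Set.Ioi s) :=
      (integrableOn_Ioi_rpow_of_lt (by linarith) hs0).const_mul α
    have hle : ∫ t in Set.Ioi s, (V α t - 1) ≤ ∫ t in Set.Ioi s, α * t ^ (-ℋ) := by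
      refine MeasureTheory.setIntegral_mono_on hIois hdomS measurableSet_Ioi ?_
      intro t ht
      exact hbound α hα t (lt_trans hs0 ht)
    have hval : ∫ t in Set.Ioi s, α * t ^ (-ℋ) = α / (ℋ - 1) * s ^ (1 - ℋ) := by
      rw [MeasureTheory.integral_const_mul,
        integral_Ioi_rpow_of_lt (by linarith : -ℋ < -1) hs0]
      rw [show -ℋ + 1 = 1 - ℋ by ring]
      have h1 : ℋ - 1 ≠ 0 := by linarith
      have h2 : (1:ℝ) - ℋ ≠ 0 := by linarith
      field_simp
      ring
    rw [← hval]
    exact hle
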